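/- Let Q, H ∈ ℝ^{d×d} be symmetric matrices and C, y ∈ ℝ. Then for every symmetric positive semi-definite matrix X with ⟨X, H⟩ = C, the SDLS dual objective satisfies the weak duality inequality −‖[Q + yH]_+‖_F² + 2Cy + ‖Q‖_F² ≤ ‖X − Q‖_F². Consequently, if there exists y ∈ ℝ with −‖[Q + yH]_+‖_F² + 2y + ‖Q‖_F² > r² for some r ≥ 0, then there is no positive semi-definite X with ⟨X, H⟩ = 1 and ‖X − Q‖_F ≤ r. -/

import Mathlib

open scoped BigOperators
open scoped Matrix

/-- Frobenius inner product ⟨A,B⟩ = tr(Aᵀ B). -/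
noncomputable def frob {d : ℕ} (A B : Matrix (Fin d) (Fin d) ℝ) : ℝ :=
  Matrix.trace (Aᵀ * B)

/-- Frobenius norm ‖A‖_F = √⟨A,A⟩. -/
noncomputable def frobNorm {d : ℕ} (A : Matrix (Fin d) (Fin d) ℝ) : ℝ :=
  Real.sqrt (frob A A)

lemma trace_nonneg_of_psd {d : ℕ} {A : Matrix (Fin d) (Fin d) ℝ}
    (hA : A.PosSemidef) : 0 ≤ A.trace := by
  apply Finset.sum_nonneg
  intro i _
  have := hA.dotProduct_mulVec_nonneg (Pi.single i 1)
  simpa [dotProduct, Matrix.mulVec, Pi.single_apply] using this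

lemma trace_mul_nonneg {d : ℕ} {A B : Matrix (Fin d) (Fin d) ℝ}
    (hA : A.PosSemidef) (hB : B.PosSemidef) : 0 ≤ (A * B).trace := by
  obtain ⟨S, hS⟩ : ∃ S : Matrix (Fin d) (Fin d) ℝ, B = Sᴴ * S := by
    open scoped MatrixOrder in
    exact (CStarAlgebra.nonneg_iff_eq_star_mul_self.mp hB.nonneg).imp fun S h => h
  have : (A * B).trace = (S * A * Sᴴ).trace := by
    rw [hS, ← Matrix.mul_assoc, Matrix.trace_mul_comm, Matrix.mul_assoc]
  rw [this]
  exact trace_nonneg_of_psd (hA.mul_mul_conjTranspose_same S)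

lemma frob_comm {d : ℕ} (A B : Matrix (Fin d) (Fin d) ℝ) : frob A B = frob B A := by
  rw [frob, frob, ← Matrix.trace_transpose (Aᵀ * B), Matrix.transpose_mul,
    Matrix.transpose_transpose, Matrix.trace_mul_comm]

lemma frob_add_right {d : ℕ} (A B C : Matrix (Fin d) (Fin d) ℝ) :
    frob A (B + C) = frob A B + frob A C := by
  simp [frob, Matrix.mul_add]

lemma frob_add_left {d : ℕ} (A B C : Matrix (Fin d) (Fin d) ℝ) :
    frob (A + B) C = frob A C + frob B C := by
  simp [frob, Matrix.transpose_add, Matrix.add_mul]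

lemma frob_smul_right {d : ℕ} (c : ℝ) (A B : Matrix (Fin d) (Fin d) ℝ) :
    frob A (c • B) = c * frob A B := by
  simp [frob, Matrix.mul_smul]

lemma frob_neg_right {d : ℕ} (A B : Matrix (Fin d) (Fin d) ℝ) :
    frob A (-B) = -frob A B := by
  simp [frob, Matrix.mul_neg]

lemma frob_sub_expand {d : ℕ} (A B : Matrix (Fin d) (Fin d) ℝ) :
    frob (A - B) (A - B) = frob A A - 2 * frob A B + frob B B := by
  have hneg : ∀ U V : Matrix (Fin d) (Fin d) ℝ, frob (-U) V = -frob U V := by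
    intro U V; simp [frob, Matrix.transpose_neg, Matrix.neg_mul]
  rw [sub_eq_add_neg, frob_add_left, frob_add_right, frob_add_right, frob_neg_right,
    hneg, hneg, frob_neg_right, frob_comm B A]
  ring

lemma frob_self_nonneg {d : ℕ} (A : Matrix (Fin d) (Fin d) ℝ) : 0 ≤ frob A A := by
  rw [frob]
  have : (Aᵀ * A).PosSemidef := by
    have := Matrix.posSemidef_conjTranspose_mul_self A
    simpa using this
  exact trace_nonneg_of_psd this

lemma frobNorm_sq {d : ℕ} (A : Matrix (Fin d) (Fin d) ℝ) :
    frobNorm A ^ 2 = frob A A :=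
  Real.sq_sqrt (frob_self_nonneg A)

lemma frob_nonneg_of_psd {d : ℕ} {A B : Matrix (Fin d) (Fin d) ℝ}
    (hA : A.PosSemidef) (hB : B.PosSemidef) : 0 ≤ frob A B := by
  rw [frob]
  have hAt : Aᵀ = A := by
    have := hA.1; simpa [Matrix.IsHermitian, Matrix.conjTranspose_eq_transpose_of_trivial] using this
  rw [hAt]
  exact trace_mul_nonneg hA hB

/-- Weak duality for the SDLS dual objective, and the resulting screening
certificate: the positive/negative part decomposition of Q + yH is given as
hypotheses (it is unique with these properties). -/
theorem sdls_weak_duality {d : ℕ} (Q H Qyplus Qyminus : Matrix (Fin d) (Fin d) ℝ)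
    (hQ : Q.IsSymm) (hH : H.IsSymm) (C y : ℝ)
    (hdecomp : Q + y • H = Qyplus + Qyminus)
    (hplus : Qyplus.PosSemidef) (hminus : (-Qyminus).PosSemidef)
    (horth : frob Qyplus Qyminus = 0) :
    (∀ X : Matrix (Fin d) (Fin d) ℝ, X.PosSemidef → frob X H = C →
      -(frobNorm Qyplus ^ 2) + 2 * C * y + frobNorm Q ^ 2 ≤ frobNorm (X - Q) ^ 2) ∧
    (∀ r : ℝ, 0 ≤ r →
      -(frobNorm Qyplus ^ 2) + 2 * y + frobNorm Q ^ 2 > r ^ 2 →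
      ¬ ∃ X : Matrix (Fin d) (Fin d) ℝ,
        X.PosSemidef ∧ frob X H = 1 ∧ frobNorm (X - Q) ≤ r) := by
  have main : ∀ C' : ℝ, ∀ X : Matrix (Fin d) (Fin d) ℝ, X.PosSemidef → frob X H = C' →
      -(frobNorm Qyplus ^ 2) + 2 * C' * y + frobNorm Q ^ 2 ≤ frobNorm (X - Q) ^ 2 := by
    intro C' X hX hC
    rw [frobNorm_sq, frobNorm_sq, frobNorm_sq, frob_sub_expand]
    have hXM : frob X Q + y * frob X H = frob X Qyplus + frob X Qyminus := by
      rw [← frob_smul_right, ← frob_add_right, hdecomp, frob_add_right]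
    have hXN : 0 ≤ -frob X Qyminus := by
      rw [← frob_neg_right]
      exact frob_nonneg_of_psd hX hminus
    have hkey : 0 ≤ frob X X - 2 * frob X Qyplus + frob Qyplus Qyplus := by
      rw [← frob_sub_expand]; exact frob_self_nonneg _
    rw [hC] at hXM
    linarith
  refine ⟨main C, ?_⟩
  rintro r hr hgt ⟨X, hX, h1, hle⟩
  have h2 := main 1 X hX h1
  have h3 : frobNorm (X - Q) ^ 2 ≤ r ^ 2 := by
    have h0 : 0 ≤ frobNorm (X - Q) := Real.sqrt_nonneg _
    nlinarith
  nlinarith
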